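/- Let μ₀ = μ₁ + μ₂ with μ₀ ≥ μ₁ having compact infinite supports, and β_n := γ_n(μ₁)/γ_n(μ₀) − 1. Then ‖p_n(μ₀,·) − p_n(μ₁,·)‖²_{L²(μ₁)} = 2β_n/(1+β_n) − ‖p_n(μ₀,·)‖²_{L²(μ₂)}, and consequently ‖p_n(μ₀,·) − p_n(μ₁,·)‖²_{L²(μ₁)} ≤ 2β_n. -/

import Mathlib

open MeasureTheory Polynomial Filter ComplexConjugate

noncomputable section

/-- The (closed) support of a Borel measure on `ℂ`. -/
def msupp (μ : Measure ℂ) : Set ℂ := {z | ∀ U ∈ nhds z, μ U ≠ 0}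

/-- `p` is the sequence of orthonormal polynomials for `μ`:
`p n` has degree `n`, positive (real) leading coefficient, and
`⟪p m, p n⟫_μ = δ_{m n}`. -/
lemma msupp_compl_null (μ : Measure ℂ) : μ (msupp μ)ᶜ = 0 := by
  apply measure_null_of_locally_null
  intro x hx
  simp only [msupp, Set.mem_compl_iff, Set.mem_setOf_eq, not_forall] at hx
  obtain ⟨U, hU, hU0⟩ := hx
  exact ⟨U, nhdsWithin_le_nhds hU, by simpa using hU0⟩

lemma integrable_of_cont {E : Type*} [NormedAddCommGroup E] (μ : Measure ℂ) [IsFiniteMeasure μ]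
    (hc : IsCompact (msupp μ)) {f : ℂ → E} (hf : Continuous f) : Integrable f μ := by
  obtain ⟨C, hC⟩ := hc.exists_bound_of_continuousOn hf.continuousOn
  refine ⟨hf.aestronglyMeasurable, HasFiniteIntegral.of_bounded (C := C) ?_⟩
  filter_upwards [measure_eq_zero_iff_ae_notMem.mp (msupp_compl_null μ)] with z hz
  exact hC z (by simpa using hz)

lemma span_aux (p1 : ℕ → Polynomial ℂ) (hdeg : ∀ n, (p1 n).natDegree = n)
    (hne : ∀ n, (p1 n).leadingCoeff ≠ 0) :
    ∀ m : ℕ, ∀ q : Polynomial ℂ, q.degree < (m : ℕ) →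
      ∃ c : ℕ → ℂ, q = ∑ k ∈ Finset.range m, Polynomial.C (c k) * p1 k := by
  intro m
  induction m with
  | zero =>
    intro q hq
    refine ⟨0, ?_⟩
    simp only [Finset.range_zero, Finset.sum_empty]
    by_contra h
    exact absurd (Polynomial.zero_le_degree_iff.mpr h) (not_le.mpr (by simpa using hq))
  | succ m ih =>
    intro q hq
    have hp1ne : p1 m ≠ 0 := fun h => hne m (by simp [h])
    have hdegp1 : (p1 m).degree = (m : ℕ) := by
      rw [Polynomial.degree_eq_natDegree hp1ne, hdeg m]
    by_cases h : q.degree < (m : ℕ)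
    · obtain ⟨c, hc⟩ := ih q h
      refine ⟨fun k => if k = m then 0 else c k, ?_⟩
      beta_reduce
      rw [Finset.sum_range_succ, if_pos rfl, map_zero, zero_mul, add_zero, hc]
      exact Finset.sum_congr rfl fun k hk => by
        rw [if_neg (Finset.mem_range.mp hk).ne]
    · have hq0 : q ≠ 0 := by
        rintro rfl
        exact h (by simp [Polynomial.degree_zero])
      have hdq : q.degree = (m : ℕ) := by
        rw [Polynomial.degree_eq_natDegree hq0] at h hq ⊢
        have h1 : q.natDegree < m + 1 := by exact_mod_cast hq
        have h2 : ¬ q.natDegree < m := fun hh => h (by exact_mod_cast hh)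
        congr 1
        omega
      set a := q.leadingCoeff / (p1 m).leadingCoeff with ha
      have haz : a ≠ 0 := div_ne_zero (Polynomial.leadingCoeff_ne_zero.mpr hq0) (hne m)
      have hdCa : (Polynomial.C a * p1 m).degree = q.degree := by
        rw [Polynomial.degree_C_mul haz, hdegp1, hdq]
      have hlc : q.leadingCoeff = (Polynomial.C a * p1 m).leadingCoeff := by
        rw [Polynomial.leadingCoeff_mul, Polynomial.leadingCoeff_C, ha,
          div_mul_cancel₀ _ (hne m)]
      have hsub : (q - Polynomial.C a * p1 m).degree < (m : ℕ) := by
        rw [← hdq]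
        exact Polynomial.degree_sub_lt hdCa.symm hq0 hlc
      obtain ⟨c, hc⟩ := ih _ hsub
      refine ⟨fun k => if k = m then a else c k, ?_⟩
      beta_reduce
      rw [Finset.sum_range_succ, if_pos rfl]
      have : ∑ k ∈ Finset.range m, Polynomial.C (if k = m then a else c k) * p1 k
          = ∑ k ∈ Finset.range m, Polynomial.C (c k) * p1 k :=
        Finset.sum_congr rfl fun k hk => by rw [if_neg (Finset.mem_range.mp hk).ne]
      rw [this, ← hc]
      ring

def ONP (μ : Measure ℂ) (p : ℕ → Polynomial ℂ) : Prop :=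
  (∀ n, (p n).natDegree = n) ∧
  (∀ n, 0 < ((p n).leadingCoeff).re ∧ ((p n).leadingCoeff).im = 0) ∧
  (∀ m n, ∫ z, (p m).eval z * (starRingEnd ℂ) ((p n).eval z) ∂μ
      = if m = n then 1 else 0)

/-- The `n`-th Christoffel function of the measure `μ` at the point `z`. -/
def christoffel (μ : Measure ℂ) (n : ℕ) (z : ℂ) : ℝ :=
  sInf {r : ℝ | ∃ P : Polynomial ℂ, P.natDegree ≤ n ∧ P.eval z = 1 ∧
      r = ∫ t, ‖P.eval t‖ ^ 2 ∂μ}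

/-- `‖p_n(μ₀,·) − p_n(μ₁,·)‖²_{L²(μ₁)} = 2β_n/(1+β_n) − ‖p_n(μ₀,·)‖²_{L²(μ₂)}`,
and consequently it is at most `2β_n`. -/
theorem stmt_9 (μ0 μ1 μ2 : Measure ℂ) [IsFiniteMeasure μ1] [IsFiniteMeasure μ2]
    (hsum : μ0 = μ1 + μ2) (hle : μ1 ≤ μ0)
    (h0c : IsCompact (msupp μ0)) (h0i : (msupp μ0).Infinite)
    (h1c : IsCompact (msupp μ1)) (h1i : (msupp μ1).Infinite)
    (p0 p1 : ℕ → Polynomial ℂ) (hp0 : ONP μ0 p0) (hp1 : ONP μ1 p1)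
    (β : ℕ → ℝ)
    (hβ : ∀ n, β n = ((p1 n).leadingCoeff).re / ((p0 n).leadingCoeff).re - 1) :
    ∀ n : ℕ,
      (∫ z, ‖(p0 n).eval z - (p1 n).eval z‖ ^ 2 ∂μ1)
        = 2 * β n / (1 + β n) - (∫ z, ‖(p0 n).eval z‖ ^ 2 ∂μ2) ∧
      (∫ z, ‖(p0 n).eval z - (p1 n).eval z‖ ^ 2 ∂μ1) ≤ 2 * β n := by
  obtain ⟨hd0, hl0, ho0⟩ := hp0
  obtain ⟨hd1, hl1, ho1⟩ := hp1
  haveI : IsFiniteMeasure μ0 := by rw [hsum]; infer_instance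
  have hle2 : μ2 ≤ μ0 := hsum ▸ Measure.le_add_left le_rfl
  -- norm identity
  have habs : ∀ (μ : Measure ℂ) (F : ℂ → ℂ), Integrable (fun z => F z * conj (F z)) μ →
      ∫ z, ‖F z‖ ^ 2 ∂μ = (∫ z, F z * conj (F z) ∂μ).re := by
    intro μ F hint
    have h := integral_re hint
    simp only [RCLike.re_to_complex] at h
    rw [← h]
    refine integral_congr_ae (Eventually.of_forall fun z => ?_)
    show ‖F z‖ ^ 2 = (F z * conj (F z)).re
    rw [Complex.sq_norm, Complex.mul_conj, Complex.ofReal_re]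
  intro n
  set f : ℂ → ℂ := fun z => (p0 n).eval z with hf
  set g : ℂ → ℂ := fun z => (p1 n).eval z with hg
  have hfc : Continuous f := (p0 n).continuous
  have hgc : Continuous g := (p1 n).continuous
  -- generic integrability
  have hintC : ∀ {F : ℂ → ℂ}, Continuous F → Integrable F μ0 :=
    fun hF => integrable_of_cont μ0 h0c hF
  have hintR : ∀ {F : ℂ → ℝ}, Continuous F → Integrable F μ0 :=
    fun hF => integrable_of_cont μ0 h0c hF
  have hconjg : Continuous fun z => conj (g z) := Complex.continuous_conj.comp hgc
  have hconjf : Continuous fun z => conj (f z) := Complex.continuous_conj.comp hfc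
  -- leading coefficients
  set γ0 : ℂ := (p0 n).leadingCoeff with hγ0def
  set γ1 : ℂ := (p1 n).leadingCoeff with hγ1def
  have h0r : 0 < γ0.re := (hl0 n).1
  have h1r : 0 < γ1.re := (hl1 n).1
  have hγ0 : γ0 = ((γ0.re : ℝ) : ℂ) :=
    Complex.ext rfl (by simp only [Complex.ofReal_im]; exact (hl0 n).2)
  have hγ1 : γ1 = ((γ1.re : ℝ) : ℂ) :=
    Complex.ext rfl (by simp only [Complex.ofReal_im]; exact (hl1 n).2)
  have hγ0ne : γ0 ≠ 0 := fun h => by simp [h] at h0r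
  have hγ1ne : γ1 ≠ 0 := fun h => by simp [h] at h1r
  set c : ℂ := γ0 / γ1 with hcdef
  have hcne : c ≠ 0 := div_ne_zero hγ0ne hγ1ne
  have hcre : c = ((γ0.re / γ1.re : ℝ) : ℂ) := by
    conv_lhs => rw [hcdef, hγ0, hγ1]
    exact (Complex.ofReal_div _ _).symm
  -- the difference polynomial
  have hp0ne : p0 n ≠ 0 := fun h => by
    have := h0r; rw [hγ0def, h] at this; simp at this
  have hp1ne : p1 n ≠ 0 := fun h => by
    have := h1r; rw [hγ1def, h] at this; simp at this
  have hdeg0 : (p0 n).degree = (n : ℕ) := by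
    rw [Polynomial.degree_eq_natDegree hp0ne, hd0 n]
  have hdeg1 : (p1 n).degree = (n : ℕ) := by
    rw [Polynomial.degree_eq_natDegree hp1ne, hd1 n]
  have hdegq : (p0 n - Polynomial.C c * p1 n).degree < (n : ℕ) := by
    have h1 : (p0 n).degree = (Polynomial.C c * p1 n).degree := by
      rw [Polynomial.degree_C_mul hcne, hdeg1, hdeg0]
    have h2 : (p0 n).leadingCoeff = (Polynomial.C c * p1 n).leadingCoeff := by
      rw [Polynomial.leadingCoeff_mul, Polynomial.leadingCoeff_C, ← hγ1def, ← hγ0def,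
        hcdef, div_mul_cancel₀ _ hγ1ne]
    have := Polynomial.degree_sub_lt h1 hp0ne h2
    rwa [hdeg0] at this
  obtain ⟨cc, hcc⟩ := span_aux p1 hd1
    (fun k => fun h => by have := (hl1 k).1; simp [h] at this) n _ hdegq
  have heval : ∀ z, f z = c * g z + ∑ k ∈ Finset.range n, cc k * (p1 k).eval z := by
    intro z
    have h := congrArg (Polynomial.eval z) hcc
    simp only [Polynomial.eval_sub, Polynomial.eval_mul, Polynomial.eval_C,
      Polynomial.eval_finset_sum] at h
    simp only [hf, hg]
    linear_combination h
  -- inner product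
  have hgg : ∫ z, g z * conj (g z) ∂μ1 = 1 := by
    have := ho1 n n; rw [if_pos rfl] at this; exact this
  have hI : ∫ z, f z * conj (g z) ∂μ1 = c := by
    have hsplit : ∀ z, f z * conj (g z)
        = c * (g z * conj (g z)) + ∑ k ∈ Finset.range n, cc k * ((p1 k).eval z * conj (g z)) := by
      intro z
      rw [heval z, add_mul, Finset.sum_mul]
      simp only [mul_assoc]
    simp only [hsplit]
    have int1 : Integrable (fun z => c * (g z * conj (g z))) μ1 :=
      ((hintC (hgc.mul hconjg)).const_mul c).mono_measure hle
    have int2 : ∀ k ∈ Finset.range n,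
        Integrable (fun z => cc k * ((p1 k).eval z * conj (g z))) μ1 :=
      fun k _ => ((hintC (((p1 k).continuous.mul hconjg))).const_mul (cc k)).mono_measure hle
    rw [integral_add int1 (integrable_finset_sum _ int2), integral_finset_sum _ int2,
      integral_const_mul, hgg]
    have hz : ∀ k ∈ Finset.range n, ∫ z, cc k * ((p1 k).eval z * conj (g z)) ∂μ1 = 0 := by
      intro k hk
      have h2 := ho1 k n
      rw [if_neg (Finset.mem_range.mp hk).ne] at h2
      have h3 : ∫ z, (p1 k).eval z * conj (g z) ∂μ1 = 0 := h2
      rw [integral_const_mul, h3, mul_zero]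
    rw [Finset.sum_congr rfl hz, Finset.sum_const_zero, mul_one, add_zero]
  -- real part of inner product
  have hIfg : Integrable (fun z => f z * conj (g z)) μ1 :=
    (hintC (hfc.mul hconjg)).mono_measure hle
  have hre : ∫ z, (f z * conj (g z)).re ∂μ1 = γ0.re / γ1.re := by
    have h := integral_re hIfg
    simp only [RCLike.re_to_complex] at h
    rw [h, hI, hcre, Complex.ofReal_re]
  -- norms
  have hg2 : ∫ z, ‖g z‖ ^ 2 ∂μ1 = 1 := by
    rw [habs μ1 g ((hintC (hgc.mul hconjg)).mono_measure hle), hgg, Complex.one_re]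
  have hintf2 : Integrable (fun z => ‖f z‖ ^ 2) μ0 :=
    hintR ((continuous_norm.comp hfc).pow 2)
  have hAB : (∫ z, ‖f z‖ ^ 2 ∂μ1) + (∫ z, ‖f z‖ ^ 2 ∂μ2) = 1 := by
    have h00 : ∫ z, f z * conj (f z) ∂μ0 = 1 := by
      have := ho0 n n; rw [if_pos rfl] at this; exact this
    have hf2 : ∫ z, ‖f z‖ ^ 2 ∂μ0 = 1 := by
      rw [habs μ0 f (hintC (hfc.mul hconjf)), h00, Complex.one_re]
    rw [← integral_add_measure (hintf2.mono_measure hle) (hintf2.mono_measure hle2), ← hsum]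
    exact hf2
  -- expansion of the square
  have hexp : ∀ z, ‖f z - g z‖ ^ 2
      = ‖f z‖ ^ 2 + ‖g z‖ ^ 2 - 2 * (f z * conj (g z)).re := by
    intro z
    rw [Complex.sq_norm, Complex.sq_norm, Complex.sq_norm, Complex.normSq_sub]
  have intf2 : Integrable (fun z => ‖f z‖ ^ 2) μ1 := hintf2.mono_measure hle
  have intg2 : Integrable (fun z => ‖g z‖ ^ 2) μ1 :=
    (hintR ((continuous_norm.comp hgc).pow 2)).mono_measure hle
  have intfg2 : Integrable (fun z => ‖f z‖ ^ 2 + ‖g z‖ ^ 2) μ1 :=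
    intf2.add intg2
  have intre : Integrable (fun z => 2 * (f z * conj (g z)).re) μ1 :=
    ((hintR (Complex.continuous_re.comp (hfc.mul hconjg))).const_mul 2).mono_measure hle
  have hmain : ∫ z, ‖f z - g z‖ ^ 2 ∂μ1
      = (∫ z, ‖f z‖ ^ 2 ∂μ1) + 1 - 2 * (γ0.re / γ1.re) := by
    simp only [hexp]
    rw [integral_sub intfg2 intre, integral_add intf2 intg2, hg2, integral_const_mul, hre]
  -- conclusion
  have hβn := hβ n
  rw [← hγ0def, ← hγ1def] at hβn
  have hBnn : 0 ≤ ∫ z, ‖f z‖ ^ 2 ∂μ2 :=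
    integral_nonneg fun z => by positivity
  have hA : ∫ z, ‖f z‖ ^ 2 ∂μ1 = 1 - ∫ z, ‖f z‖ ^ 2 ∂μ2 := by
    linarith
  have hEQ : ∫ z, ‖f z - g z‖ ^ 2 ∂μ1
      = 2 * β n / (1 + β n) - ∫ z, ‖f z‖ ^ 2 ∂μ2 := by
    rw [hmain, hA, hβn]
    have ht : γ0.re ≠ 0 := ne_of_gt h0r
    have hs : γ1.re ≠ 0 := ne_of_gt h1r
    field_simp
    linear_combination (2 * γ0.re - 2 * γ1.re) * mul_inv_cancel₀ hs
  refine ⟨hEQ, ?_⟩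
  rw [hEQ]
  have h1b : 0 < 1 + β n := by
    rw [hβn]
    have h' : 1 + (γ1.re / γ0.re - 1) = γ1.re / γ0.re := by ring
    rw [h']
    positivity
  have hdd : 2 * β n / (1 + β n) ≤ 2 * β n := by
    rw [div_le_iff₀ h1b]
    nlinarith [sq_nonneg (β n)]
  linarith
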